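/- (Rearrangement maximizes logarithmic integral, Lemma 4.5 core.) Let C > 0, L > 0, and let H : ℝ → [0, C] be a measurable function supported in [-L, L] with ∫ H(x) dx = 2Cl, where l ≤ L. Let p ∈ [-L + l, L - l]. Let H' = C·𝟙_{[p-l, p+l]}. Then ∫_{-L}^{L} H(x) log(6L/|x - p|) dx ≤ ∫_{-L}^{L} H'(x) log(6L/|x - p|) dx. -/

import Mathlib

open MeasureTheory

theorem stmt8 (C L l p : ℝ) (hC : 0 < C) (hL : 0 < L) (hl : 0 < l) (hlL : l ≤ L)
    (hp : Set.Icc (p - l) (p + l) ⊆ Set.Icc (-L) L)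
    (H : ℝ → ℝ) (hHmeas : Measurable H)
    (hH0 : ∀ x : ℝ, 0 ≤ H x) (hHC : ∀ x : ℝ, H x ≤ C)
    (hsupp : ∀ x : ℝ, x ∉ Set.Icc (-L) L → H x = 0)
    (hmass : (∫ x : ℝ, H x) = 2 * C * l)
    (hintH : Integrable (fun x : ℝ => H x * Real.log (6 * L / |x - p|)))
    (hintH' : Integrable (fun x : ℝ =>
      (if x ∈ Set.Icc (p - l) (p + l) then C else 0) * Real.log (6 * L / |x - p|))) :
    (∫ x : ℝ, H x * Real.log (6 * L / |x - p|)) ≤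
      ∫ x : ℝ, (if x ∈ Set.Icc (p - l) (p + l) then C else 0) * Real.log (6 * L / |x - p|) := by
  set w : ℝ → ℝ := fun x => Real.log (6 * L / |x - p|) with hw
  set H' : ℝ → ℝ := fun x => if x ∈ Set.Icc (p - l) (p + l) then C else 0 with hH'
  set c : ℝ := Real.log (6 * L / l) with hc
  have hLl : (0:ℝ) < 6 * L / l := by positivity
  have hH'eq : H' = Set.indicator (Set.Icc (p - l) (p + l)) (fun _ => C) := by
    funext x; simp [hH', Set.indicator_apply]
  have hHint : Integrable H := by
    apply Integrable.mono' (g := Set.indicator (Set.Icc (-L) L) (fun _ => C))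
    · exact (integrable_indicator_iff measurableSet_Icc).2
        (integrableOn_const measure_Icc_lt_top.ne)
    · exact hHmeas.aestronglyMeasurable
    · filter_upwards with x
      rw [Real.norm_eq_abs, abs_of_nonneg (hH0 x)]
      by_cases hx : x ∈ Set.Icc (-L) L
      · simp [Set.indicator_apply, hx, hHC x]
      · simp [Set.indicator_apply, hx, hsupp x hx]
  have hH'int : Integrable H' := by
    rw [hH'eq]
    exact (integrable_indicator_iff measurableSet_Icc).2
      (integrableOn_const measure_Icc_lt_top.ne)
  have hH'mass : (∫ x : ℝ, H' x) = 2 * C * l := by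
    rw [hH'eq, integral_indicator measurableSet_Icc]
    rw [setIntegral_const, Real.volume_real_Icc_of_le (by linarith), smul_eq_mul]
    ring
  have hane : ∀ᵐ x : ℝ, x ≠ p := by
    rw [ae_iff]
    have : {x : ℝ | ¬ x ≠ p} = {p} := by ext x; simp
    rw [this]
    exact measure_singleton p
  have key : 0 ≤ ∫ x : ℝ, (H' x - H x) * (w x - c) := by
    refine integral_nonneg_of_ae ?_
    filter_upwards [hane] with x hx
    by_cases hmem : x ∈ Set.Icc (p - l) (p + l)
    · have h1 : 0 ≤ H' x - H x := by simp only [hH', if_pos hmem]; linarith [hHC x]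
      have hxp : 0 < |x - p| := abs_pos.2 (sub_ne_zero.2 hx)
      have hxpl : |x - p| ≤ l := by
        rw [abs_sub_le_iff]
        constructor <;> [linarith [hmem.2]; linarith [hmem.1]]
      have h2 : c ≤ w x := by
        apply Real.log_le_log hLl
        exact div_le_div_of_nonneg_left (by linarith) hxp hxpl
      exact mul_nonneg h1 (by linarith)
    · have h1 : H' x - H x ≤ 0 := by simp only [hH', if_neg hmem]; linarith [hH0 x]
      have hxp : l ≤ |x - p| := by
        rw [Set.mem_Icc, not_and_or] at hmem
        rcases hmem with h | h
        · push_neg at h; rw [abs_sub_comm]; rw [le_abs]; left; linarith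
        · push_neg at h; rw [le_abs]; left; linarith
      have hxp0 : 0 < |x - p| := lt_of_lt_of_le hl hxp
      have h2 : w x ≤ c := by
        apply Real.log_le_log (by positivity)
        exact div_le_div_of_nonneg_left (by linarith) hl hxp
      show (0:ℝ) ≤ (H' x - H x) * (w x - c)
      nlinarith [h1, h2]
  have hrw : (fun x : ℝ => (H' x - H x) * (w x - c)) =
      fun x : ℝ => (H' x * w x - H x * w x) - c * (H' x - H x) := by
    funext x; ring
  have hint1 : Integrable (fun x : ℝ => H' x * w x - H x * w x) := hintH'.sub hintH
  have hint2 : Integrable (fun x : ℝ => c * (H' x - H x)) := ((hH'int.sub hHint).const_mul c)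
  rw [hrw, integral_sub hint1 hint2, integral_sub hintH' hintH, integral_const_mul,
    integral_sub hH'int hHint, hH'mass, hmass] at key
  linarith
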